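/- In the free L-algebra on a set X (an algebra with two binary operations ≺, ≻ modulo only the relation (x ≻ y) ≺ z = x ≻ (y ≺ z)), every element can be uniquely written as a linear combination of normal L-words; in particular, for any L-words u, v, the normal form of u ≺ v is: u ≺ v if u is a letter or u = u₁ ≺ u₂, and u₁ ≻ [u₂ ≺ v] if u = u₁ ≻ u₂, and this rewriting terminates and is confluent. -/
import Mathlib


/-- `L`-words over an alphabet `X`: letters and the two binary operations
`pr` (≺) and `sc` (≻). -/
inductive LWord (X : Type) where
  | ltr : X → LWord X
  | pr : LWord X → LWord X → LWord X
  | sc : LWord X → LWord X → LWord X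
deriving DecidableEq

/-- Number of letter occurrences in an `L`-word. -/
def LWord.deg {X : Type} : LWord X → ℕ
  | .ltr _ => 1
  | .pr u v => u.deg + v.deg
  | .sc u v => u.deg + v.deg

/-- Normal `L`-words: letters; `v ≻ w` with `v, w` normal; and `v ≺ w` with
`v, w` normal and `v` not of the form `v₁ ≻ v₂`. -/
inductive IsNormalL {X : Type} : LWord X → Prop
  | ltr (x : X) : IsNormalL (.ltr x)
  | sc {v w : LWord X} : IsNormalL v → IsNormalL w → IsNormalL (.sc v w)
  | pr {v w : LWord X} : IsNormalL v → IsNormalL w →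
      (∀ v1 v2 : LWord X, v ≠ .sc v1 v2) → IsNormalL (.pr v w)

/-- Normalized `≺`-product: `[u ≺ v] = u ≺ v` unless `u = u₁ ≻ u₂`, in which
case `[u ≺ v] = u₁ ≻ [u₂ ≺ v]`. -/
def nprL {X : Type} : LWord X → LWord X → LWord X
  | .sc u1 u2, v => .sc u1 (nprL u2 v)
  | .ltr x, v => .pr (.ltr x) v
  | .pr u1 u2, v => .pr (.pr u1 u2) v

/-- The normal form of an `L`-word under the rewriting
`(x ≻ y) ≺ z → x ≻ (y ≺ z)`. -/
def nfL {X : Type} : LWord X → LWord X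
  | .ltr x => .ltr x
  | .sc u v => .sc (nfL u) (nfL v)
  | .pr u v => nprL (nfL u) (nfL v)

/-- The congruence on `L`-words generated by the entanglement relation
`(x ≻ y) ≺ z = x ≻ (y ≺ z)`. -/
inductive LCong {X : Type} : LWord X → LWord X → Prop
  | ent (x y z : LWord X) : LCong (.pr (.sc x y) z) (.sc x (.pr y z))
  | refl (u : LWord X) : LCong u u
  | symm {u v : LWord X} : LCong u v → LCong v u
  | trans {u v w : LWord X} : LCong u v → LCong v w → LCong u w
  | congr_pr {u u' v v' : LWord X} : LCong u u' → LCong v v' → LCong (.pr u v) (.pr u' v')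
  | congr_sc {u u' v v' : LWord X} : LCong u u' → LCong v v' → LCong (.sc u v) (.sc u' v')

lemma nprL_normal {X : Type} {u v : LWord X} (hu : IsNormalL u) (hv : IsNormalL v) :
    IsNormalL (nprL u v) := by
  induction u with
  | ltr x => exact .pr hu hv (by simp)
  | pr a b iha ihb => exact .pr hu hv (by simp)
  | sc a b iha ihb =>
    cases hu with
    | sc ha hb => exact .sc ha (ihb hb)

lemma nfL_normal {X : Type} (u : LWord X) : IsNormalL (nfL u) := by
  induction u with
  | ltr x => exact .ltr x
  | pr a b iha ihb => exact nprL_normal iha ihb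
  | sc a b iha ihb => exact .sc iha ihb

lemma nfL_fix {X : Type} {u : LWord X} (h : IsNormalL u) : nfL u = u := by
  induction h with
  | ltr x => rfl
  | sc hv hw ihv ihw => simp [nfL, ihv, ihw]
  | @pr v w hv hw hne ihv ihw =>
    show nprL (nfL v) (nfL w) = _
    rw [ihv, ihw]
    cases v with
    | ltr x => rfl
    | pr a b => rfl
    | sc a b => exact absurd rfl (hne a b)

lemma cong_nprL {X : Type} (u v : LWord X) : LCong (.pr u v) (nprL u v) := by
  induction u generalizing v with
  | ltr x => exact .refl _
  | pr a b iha ihb => exact .refl _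
  | sc a b iha ihb =>
    exact .trans (.ent a b v) (.congr_sc (.refl a) (ihb v))

lemma nfL_cong {X : Type} (u : LWord X) : LCong u (nfL u) := by
  induction u with
  | ltr x => exact .refl _
  | pr a b iha ihb =>
    exact .trans (.congr_pr iha ihb) (cong_nprL _ _)
  | sc a b iha ihb => exact .congr_sc iha ihb

lemma cong_nf_eq {X : Type} {u v : LWord X} (h : LCong u v) : nfL u = nfL v := by
  induction h with
  | ent x y z => rfl
  | refl u => rfl
  | symm h ih => exact ih.symm
  | trans h1 h2 ih1 ih2 => exact ih1.trans ih2
  | congr_pr h1 h2 ih1 ih2 => show nprL _ _ = nprL _ _; rw [ih1, ih2]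
  | congr_sc h1 h2 ih1 ih2 => simp only [nfL, ih1, ih2]

/-- In the free `L`-algebra, the rewriting `(x ≻ y) ≺ z → x ≻ (y ≺ z)` terminates
and is confluent, with the normal `L`-words as unique normal forms: every word is
congruent to a unique normal word (so normal `L`-words are a basis of the free
`L`-algebra), and the normal form of `u ≺ v` is `u ≺ v` if `u` is a letter or
`u = u₁ ≺ u₂`, and `u₁ ≻ [u₂ ≺ v]` if `u = u₁ ≻ u₂`. -/
theorem lword_normal_form_unique (X : Type) :
    (∀ u : LWord X, IsNormalL (nfL u)) ∧
    (∀ u : LWord X, LCong u (nfL u)) ∧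
    (∀ u v : LWord X, LCong u v ↔ nfL u = nfL v) ∧
    (∀ u v : LWord X, IsNormalL u → IsNormalL v → LCong u v → u = v) ∧
    (∀ u v : LWord X, IsNormalL u → IsNormalL v →
      (∀ u1 u2 : LWord X, u ≠ .sc u1 u2) → nfL (.pr u v) = .pr u v) ∧
    (∀ u1 u2 v : LWord X, IsNormalL (.sc u1 u2) → IsNormalL v →
      nfL (.pr (.sc u1 u2) v) = .sc u1 (nfL (.pr u2 v))) := by

  refine ⟨nfL_normal, nfL_cong, ?_, ?_, ?_, ?_⟩
  · intro u v
    constructor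
    · exact cong_nf_eq
    · intro h
      exact (nfL_cong u).trans (h ▸ (nfL_cong v).symm)
  · intro u v hu hv h
    have := cong_nf_eq h
    rwa [nfL_fix hu, nfL_fix hv] at this
  · intro u v hu hv hne
    show nprL (nfL u) (nfL v) = _
    rw [nfL_fix hu, nfL_fix hv]
    cases u with
    | ltr x => rfl
    | pr a b => rfl
    | sc a b => exact absurd rfl (hne a b)
  · intro u1 u2 v hu hv
    cases hu with
    | sc h1 h2 =>
      show nprL (nfL (.sc u1 u2)) (nfL v) = _
      show nprL (.sc (nfL u1) (nfL u2)) (nfL v) = _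
      rw [nfL_fix h1]
      rfl
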